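/- The eight three-qubit product states |0⟩|1⟩|0±1⟩, |1⟩|0±1⟩|0⟩, |0±1⟩|0⟩|1⟩, |0⟩|0⟩|0⟩, |1⟩|1⟩|1⟩ (where |0±1⟩ := (|0⟩±|1⟩)/√2) form an orthonormal basis of ℂ² ⊗ ℂ² ⊗ ℂ². -/

import Mathlib

noncomputable section

abbrev Q : Type := EuclideanSpace ℂ (Fin 2)
abbrev Q3 : Type := EuclideanSpace ℂ (Fin 2 × Fin 2 × Fin 2)

def e2 (i : Fin 2) : Q := EuclideanSpace.single i 1
def s2 : ℂ := Real.sqrt 2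
def plus : Q := s2⁻¹ • (e2 0 + e2 1)
def minus : Q := s2⁻¹ • (e2 0 - e2 1)

/-- The tensor product `a ⊗ b ⊗ c ∈ (ℂ²)^⊗3`. -/
def tq3 (a b c : Q) : Q3 := WithLp.toLp 2 (fun p : Fin 2 × Fin 2 × Fin 2 => a p.1 * b p.2.1 * c p.2.2)

/-- The completed Shift product basis of `(ℂ²)^⊗3`. -/
def shiftBasis : Fin 8 → Q3 :=
  ![tq3 (e2 0) (e2 1) plus, tq3 (e2 0) (e2 1) minus,
    tq3 (e2 1) plus (e2 0), tq3 (e2 1) minus (e2 0),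
    tq3 plus (e2 0) (e2 1), tq3 minus (e2 0) (e2 1),
    tq3 (e2 0) (e2 0) (e2 0), tq3 (e2 1) (e2 1) (e2 1)]

open scoped InnerProductSpace

@[simp] lemma e2_apply (i j : Fin 2) : e2 i j = if j = i then 1 else 0 := by
  simp [e2, EuclideanSpace.single_apply]

lemma inner_tq3 (a b c a' b' c' : Q) :
    ⟪tq3 a b c, tq3 a' b' c'⟫_ℂ = ⟪a, a'⟫_ℂ * ⟪b, b'⟫_ℂ * ⟪c, c'⟫_ℂ := by
  simp only [PiLp.inner_apply, RCLike.inner_apply, tq3, PiLp.toLp_apply, Fintype.sum_prod_type,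
    Fin.sum_univ_two, map_mul]
  ring

@[simp] lemma conj_s2 : (starRingEnd ℂ) s2 = s2 := Complex.conj_ofReal _

@[simp] lemma conj_s2inv : (starRingEnd ℂ) s2⁻¹ = s2⁻¹ := by
  rw [map_inv₀, conj_s2]

lemma s2_mul_s2 : s2 * s2 = 2 := by
  simp only [s2, ← Complex.ofReal_mul]
  norm_num [Real.mul_self_sqrt]

lemma s2inv_sq : s2⁻¹ * s2⁻¹ = 2⁻¹ := by
  rw [← mul_inv, s2_mul_s2]

@[simp] lemma ip_ee (i j : Fin 2) : ⟪e2 i, e2 j⟫_ℂ = if i = j then 1 else 0 := by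
  fin_cases i <;> fin_cases j <;>
    simp [-inner_self_eq_norm_sq_to_K, PiLp.inner_apply, RCLike.inner_apply, Fin.sum_univ_two]

@[simp] lemma ip_e_plus (i : Fin 2) : ⟪e2 i, plus⟫_ℂ = s2⁻¹ := by
  fin_cases i <;>
    simp [-inner_self_eq_norm_sq_to_K, plus, inner_smul_right, inner_add_right, PiLp.inner_apply, RCLike.inner_apply,
      Fin.sum_univ_two]

@[simp] lemma ip_plus_e (i : Fin 2) : ⟪plus, e2 i⟫_ℂ = s2⁻¹ := by
  rw [← inner_conj_symm, ip_e_plus, conj_s2inv]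

@[simp] lemma ip_e_minus (i : Fin 2) : ⟪e2 i, minus⟫_ℂ = if i = 0 then s2⁻¹ else -s2⁻¹ := by
  fin_cases i <;>
    simp [-inner_self_eq_norm_sq_to_K, minus, inner_smul_right, inner_sub_right, PiLp.inner_apply, RCLike.inner_apply,
      Fin.sum_univ_two]

@[simp] lemma ip_minus_e (i : Fin 2) : ⟪minus, e2 i⟫_ℂ = if i = 0 then s2⁻¹ else -s2⁻¹ := by
  rw [← inner_conj_symm, ip_e_minus]
  split <;> simp

@[simp] lemma ip_pp : ⟪plus, plus⟫_ℂ = 1 := by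
  rw [show (plus : Q) = s2⁻¹ • (e2 0 + e2 1) from rfl]
  simp only [inner_smul_left, inner_smul_right, inner_add_left, inner_add_right, ip_ee,
    conj_s2inv]
  norm_num
  linear_combination 2 * s2inv_sq

@[simp] lemma ip_mm : ⟪minus, minus⟫_ℂ = 1 := by
  rw [show (minus : Q) = s2⁻¹ • (e2 0 - e2 1) from rfl]
  simp only [inner_smul_left, inner_smul_right, inner_sub_left, inner_sub_right, ip_ee,
    conj_s2inv]
  norm_num
  linear_combination 2 * s2inv_sq

@[simp] lemma ip_pm : ⟪plus, minus⟫_ℂ = 0 := by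
  rw [show (plus : Q) = s2⁻¹ • (e2 0 + e2 1) from rfl,
    show (minus : Q) = s2⁻¹ • (e2 0 - e2 1) from rfl]
  simp only [inner_smul_left, inner_smul_right, inner_add_left, inner_sub_right, ip_ee,
    conj_s2inv]
  norm_num

@[simp] lemma ip_mp : ⟪minus, plus⟫_ℂ = 0 := by
  rw [← inner_conj_symm, ip_pm, map_zero]

lemma sb0 : shiftBasis 0 = tq3 (e2 0) (e2 1) plus := rfl
lemma sb1 : shiftBasis 1 = tq3 (e2 0) (e2 1) minus := rfl
lemma sb2 : shiftBasis 2 = tq3 (e2 1) plus (e2 0) := rfl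
lemma sb3 : shiftBasis 3 = tq3 (e2 1) minus (e2 0) := rfl
lemma sb4 : shiftBasis 4 = tq3 plus (e2 0) (e2 1) := rfl
lemma sb5 : shiftBasis 5 = tq3 minus (e2 0) (e2 1) := rfl
lemma sb6 : shiftBasis 6 = tq3 (e2 0) (e2 0) (e2 0) := rfl
lemma sb7 : shiftBasis 7 = tq3 (e2 1) (e2 1) (e2 1) := rfl

/-- the eight listed three-qubit product states form an orthonormal basis
of `ℂ² ⊗ ℂ² ⊗ ℂ²`. -/
theorem shiftBasis_orthonormal_basis :
    Orthonormal ℂ shiftBasis ∧ Submodule.span ℂ (Set.range shiftBasis) = ⊤ := by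
  have horth : Orthonormal ℂ shiftBasis := by
    rw [orthonormal_iff_ite]
    intro i j
    fin_cases i <;> fin_cases j <;>
      simp [-PiLp.inner_apply, -inner_self_eq_norm_sq_to_K, sb0, sb1, sb2, sb3, sb4, sb5, sb6, sb7, inner_tq3, Fin.ext_iff, show ((3:Fin 8):ℕ) = 3 from rfl, show ((4:Fin 8):ℕ) = 4 from rfl, show ((5:Fin 8):ℕ) = 5 from rfl, show ((6:Fin 8):ℕ) = 6 from rfl, show ((7:Fin 8):ℕ) = 7 from rfl]
  refine ⟨horth, ?_⟩
  have hcard : Fintype.card (Fin 8) = Module.finrank ℂ Q3 := by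
    simp [finrank_euclideanSpace]
  exact LinearIndependent.span_eq_top_of_card_eq_finrank horth.linearIndependent hcard
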